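/- Let f be the germ f(x,y,z) = (x + yz(y-z) + P, y + x(x²-z²) + Q, z + xz(y-z) + R) with P,Q,R of order ≥ 4. In the chart where the blow-up of the origin is π(x,y,z) = (xz, yz, z), the lift f₁ = π⁻¹∘f∘π satisfies, modulo terms of order ≥ 4 in z: x∘f₁ = x + z²(-y + x² + y² - x²y) + O(z³), y∘f₁ = y + z²·x·(-1 + y + x² - y²) + O(z³), and z∘f₁ = z + z³x(-1+y) + O(z⁴). -/

import Mathlib

open Asymptotics Filter Topology in
/-- If `T` is `O(‖w‖⁴)` at `0 ∈ ℂ³`, then `z ↦ T (xz, yz, z)` is `O(z⁴)` at `0`. -/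
private lemma comp4_aux {T : ℂ × ℂ × ℂ → ℂ}
    (hT : T =O[nhds 0] fun w : ℂ × ℂ × ℂ => ‖w‖ ^ 4) (x y : ℂ) :
    (fun z : ℂ => T (x * z, y * z, z)) =O[𝓝 (0 : ℂ)] fun z => z ^ 4 := by
  have htend : Tendsto (fun z : ℂ => (x * z, y * z, z)) (𝓝 0) (𝓝 (0 : ℂ × ℂ × ℂ)) := by
    have hc : Continuous fun z : ℂ => (x * z, y * z, z) := by continuity
    have := hc.tendsto 0
    simp at this
    exact this
  refine (hT.comp_tendsto htend).trans ?_
  rw [Asymptotics.isBigO_iff]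
  refine ⟨(max ‖x‖ (max ‖y‖ 1)) ^ 4, Eventually.of_forall fun z => ?_⟩
  have hb : ‖(x * z, y * z, z)‖ ≤ max ‖x‖ (max ‖y‖ 1) * ‖z‖ := by
    have h1 : ‖x * z‖ ≤ max ‖x‖ (max ‖y‖ 1) * ‖z‖ := by
      rw [norm_mul]
      exact mul_le_mul_of_nonneg_right (le_max_left _ _) (norm_nonneg _)
    have h2 : ‖y * z‖ ≤ max ‖x‖ (max ‖y‖ 1) * ‖z‖ := by
      rw [norm_mul]
      exact mul_le_mul_of_nonneg_right ((le_max_left _ _).trans (le_max_right _ _))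
        (norm_nonneg _)
    have h3 : ‖z‖ ≤ max ‖x‖ (max ‖y‖ 1) * ‖z‖ := by
      nlinarith [norm_nonneg z, le_max_right ‖y‖ (1:ℝ), le_max_right ‖x‖ (max ‖y‖ 1)]
    simp only [Prod.norm_def]
    exact max_le h1 (max_le h2 h3)
  have hnn : (0:ℝ) ≤ max ‖x‖ (max ‖y‖ 1) * ‖z‖ :=
    le_trans (norm_nonneg _) hb
  calc ‖‖(x * z, y * z, z)‖ ^ 4‖ = ‖(x * z, y * z, z)‖ ^ 4 := by
        simp [abs_of_nonneg (norm_nonneg _)]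
    _ ≤ (max ‖x‖ (max ‖y‖ 1) * ‖z‖) ^ 4 := by
        exact pow_le_pow_left₀ (norm_nonneg _) hb 4
    _ = (max ‖x‖ (max ‖y‖ 1)) ^ 4 * ‖z ^ 4‖ := by
        rw [mul_pow, norm_pow]

open Asymptotics Filter Topology in
/-- Expansion of the lift `f₁` of `f(x,y,z) = (x + yz(y-z) + P, y + x(x²-z²) + Q,
z + xz(y-z) + R)` (with `P,Q,R` of order `≥ 4`) in the chart
`π(x,y,z) = (xz, yz, z)` of the blow-up of the origin. -/
theorem stmt_7 (P Q R : ℂ × ℂ × ℂ → ℂ)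
    (hP : P =O[nhds 0] fun w : ℂ × ℂ × ℂ => ‖w‖ ^ 4)
    (hQ : Q =O[nhds 0] fun w : ℂ × ℂ × ℂ => ‖w‖ ^ 4)
    (hR : R =O[nhds 0] fun w : ℂ × ℂ × ℂ => ‖w‖ ^ 4)
    (f1x f1y f1z : ℂ × ℂ × ℂ → ℂ) (x y : ℂ)
    (hlift : ∀ᶠ z in 𝓝[≠] (0 : ℂ),
      (f1x (x, y, z) * f1z (x, y, z), f1y (x, y, z) * f1z (x, y, z), f1z (x, y, z)) =
        (x * z + (y * z) * z * (y * z - z) + P (x * z, y * z, z),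
         y * z + (x * z) * ((x * z) ^ 2 - z ^ 2) + Q (x * z, y * z, z),
         z + (x * z) * z * (y * z - z) + R (x * z, y * z, z))) :
    ((fun z : ℂ => f1x (x, y, z) - (x + z ^ 2 * (-y + x ^ 2 + y ^ 2 - x ^ 2 * y)))
        =O[𝓝[≠] (0 : ℂ)] fun z => z ^ 3) ∧
    ((fun z : ℂ => f1y (x, y, z) - (y + z ^ 2 * x * (-1 + y + x ^ 2 - y ^ 2)))
        =O[𝓝[≠] (0 : ℂ)] fun z => z ^ 3) ∧
    ((fun z : ℂ => f1z (x, y, z) - (z + z ^ 3 * x * (-1 + y)))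
        =O[𝓝[≠] (0 : ℂ)] fun z => z ^ 4) := by
  set l : Filter ℂ := 𝓝[≠] (0 : ℂ) with hldef
  have hl : l ≤ 𝓝 0 := nhdsWithin_le_nhds
  have hzne : ∀ᶠ z in l, z ≠ (0 : ℂ) := by
    have := self_mem_nhdsWithin (a := (0:ℂ)) (s := {(0:ℂ)}ᶜ)
    exact this
  -- components of the lift equation
  have h1 : ∀ᶠ z in l, f1x (x, y, z) * f1z (x, y, z)
      = x * z + (y * z) * z * (y * z - z) + P (x * z, y * z, z) :=
    hlift.mono fun z h => congrArg (fun p => p.1) h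
  have h2 : ∀ᶠ z in l, f1y (x, y, z) * f1z (x, y, z)
      = y * z + (x * z) * ((x * z) ^ 2 - z ^ 2) + Q (x * z, y * z, z) :=
    hlift.mono fun z h => congrArg (fun p => p.2.1) h
  have h3 : ∀ᶠ z in l, f1z (x, y, z)
      = z + (x * z) * z * (y * z - z) + R (x * z, y * z, z) :=
    hlift.mono fun z h => congrArg (fun p => p.2.2) h
  -- composed remainders are O(z^4)
  have hPz : (fun z : ℂ => P (x * z, y * z, z)) =O[l] fun z => z ^ 4 :=
    (comp4_aux hP x y).mono hl
  have hQz : (fun z : ℂ => Q (x * z, y * z, z)) =O[l] fun z => z ^ 4 :=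
    (comp4_aux hQ x y).mono hl
  have hRz : (fun z : ℂ => R (x * z, y * z, z)) =O[l] fun z => z ^ 4 :=
    (comp4_aux hR x y).mono hl
  have hz3 : ∀ᶠ z in l, f1z (x, y, z)
      = z + z ^ 3 * x * (-1 + y) + R (x * z, y * z, z) :=
    h3.mono fun z h => by rw [h]; ring
  -- third claim
  have claimz : (fun z : ℂ => f1z (x, y, z) - (z + z ^ 3 * x * (-1 + y)))
      =O[l] fun z => z ^ 4 := by
    refine hRz.congr' (hz3.mono fun z h => ?_) EventuallyEq.rfl
    show R (x * z, y * z, z) = f1z (x, y, z) - (z + z ^ 3 * x * (-1 + y))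
    rw [h]; ring
  -- z / f1z is bounded
  have hz3tend : Tendsto (fun z : ℂ => z ^ 3) l (𝓝 0) := by
    have : Tendsto (fun z : ℂ => z ^ 3) (𝓝 0) (𝓝 0) := by
      simpa using (continuous_pow 3 (M := ℂ)).tendsto 0
    exact this.mono_left hl
  have hRdiv : Tendsto (fun z : ℂ => R (x * z, y * z, z) * z⁻¹) l (𝓝 0) := by
    have hO : (fun z : ℂ => R (x * z, y * z, z) * z⁻¹) =O[l] fun z => z ^ 3 := by
      have := hRz.mul (isBigO_refl (fun z : ℂ => z⁻¹) l)
      refine this.congr' EventuallyEq.rfl (hzne.mono fun z h => ?_)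
      field_simp
    exact hO.trans_tendsto hz3tend
  have htendz : Tendsto (fun z : ℂ => f1z (x, y, z) / z) l (𝓝 1) := by
    have base : Tendsto (fun z : ℂ => 1 + z ^ 2 * x * (-1 + y)
        + R (x * z, y * z, z) * z⁻¹) l (𝓝 1) := by
      have t1 : Tendsto (fun z : ℂ => z ^ 2 * x * (-1 + y)) l (𝓝 0) := by
        have hc : Continuous fun z : ℂ => z ^ 2 * x * (-1 + y) :=
          ((continuous_pow 2).mul continuous_const).mul continuous_const
        have := hc.tendsto 0
        have h0 : (0:ℂ) ^ 2 * x * (-1 + y) = 0 := by simp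
        rw [h0] at this
        exact this.mono_left hl
      have := (tendsto_const_nhds (x := (1:ℂ)) (f := l)).add (t1.add hRdiv)
      simpa [add_assoc] using this
    refine Tendsto.congr' ?_ base
    filter_upwards [hz3, hzne] with z h hz
    rw [h]; field_simp
  have hfzne : ∀ᶠ z in l, f1z (x, y, z) ≠ 0 := by
    have hne := htendz.eventually_ne (one_ne_zero (α := ℂ))
    filter_upwards [hne, hzne] with z h hz h0
    exact h (by simp [h0])
  have hzfz : Tendsto (fun z : ℂ => z / f1z (x, y, z)) l (𝓝 1) := by
    have := htendz.inv₀ (one_ne_zero (α := ℂ))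
    rw [inv_one] at this
    refine Tendsto.congr' ?_ this
    filter_upwards [hzne, hfzne] with z hz hfz
    rw [inv_div]
  have hzfzO : (fun z : ℂ => z / f1z (x, y, z)) =O[l] (fun _ => (1 : ℂ)) :=
    hzfz.isBigO_one ℂ
  -- constant-times-z^5 terms are O(z^4)
  have hz5 : ∀ c : ℂ, (fun z : ℂ => z ^ 5 * c) =O[l] fun z => z ^ 4 := by
    intro c
    have h1 : (fun z : ℂ => z * c) =O[l] (fun _ => (1 : ℂ)) := by
      have hc : Continuous fun z : ℂ => z * c := continuous_id.mul continuous_const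
      have := hc.tendsto 0
      exact (Filter.Tendsto.isBigO_one ℂ (this.mono_left hl))
    have := h1.mul (isBigO_refl (fun z : ℂ => z ^ 4) l)
    exact this.congr (fun z => by ring) (fun z => by ring)
  -- bounded polynomial factors
  have hAO : (fun z : ℂ => x + z ^ 2 * (-y + x ^ 2 + y ^ 2 - x ^ 2 * y))
      =O[l] (fun _ => (1 : ℂ)) := by
    have hc : Continuous fun z : ℂ => x + z ^ 2 * (-y + x ^ 2 + y ^ 2 - x ^ 2 * y) :=
      continuous_const.add ((continuous_pow 2).mul continuous_const)
    exact Filter.Tendsto.isBigO_one ℂ ((hc.tendsto 0).mono_left hl)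
  have hBO : (fun z : ℂ => y + z ^ 2 * x * (-1 + y + x ^ 2 - y ^ 2))
      =O[l] (fun _ => (1 : ℂ)) := by
    have hc : Continuous fun z : ℂ => y + z ^ 2 * x * (-1 + y + x ^ 2 - y ^ 2) :=
      continuous_const.add (((continuous_pow 2).mul continuous_const).mul continuous_const)
    exact Filter.Tendsto.isBigO_one ℂ ((hc.tendsto 0).mono_left hl)
  have hone : ∀ g : ℂ → ℂ, g =O[l] (fun z : ℂ => (1:ℂ) * z ^ 4) → g =O[l] fun z => z ^ 4 :=
    fun g hg => hg.congr (fun z => rfl) (fun z => by ring)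
  have hARz : (fun z : ℂ => (x + z ^ 2 * (-y + x ^ 2 + y ^ 2 - x ^ 2 * y))
      * R (x * z, y * z, z)) =O[l] fun z => z ^ 4 := hone _ (hAO.mul hRz)
  have hBRz : (fun z : ℂ => (y + z ^ 2 * x * (-1 + y + x ^ 2 - y ^ 2))
      * R (x * z, y * z, z)) =O[l] fun z => z ^ 4 := hone _ (hBO.mul hRz)
  -- key O(z^4) bounds for the numerators
  have hSx : (fun z : ℂ => (x * z + (y * z) * z * (y * z - z) + P (x * z, y * z, z))
      - (x + z ^ 2 * (-y + x ^ 2 + y ^ 2 - x ^ 2 * y)) * f1z (x, y, z))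
      =O[l] fun z => z ^ 4 := by
    have heq : ∀ᶠ z in l, (x * z + (y * z) * z * (y * z - z) + P (x * z, y * z, z))
        - (x + z ^ 2 * (-y + x ^ 2 + y ^ 2 - x ^ 2 * y)) * f1z (x, y, z)
        = P (x * z, y * z, z)
          - (x + z ^ 2 * (-y + x ^ 2 + y ^ 2 - x ^ 2 * y)) * R (x * z, y * z, z)
          + z ^ 5 * (x * (1 - y) ^ 2 * (x ^ 2 - y)) :=
      h3.mono fun z h => by rw [h]; ring
    exact ((hPz.sub hARz).add (hz5 _)).congr'
      (heq.mono fun z h => h.symm) EventuallyEq.rfl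
  have hSy : (fun z : ℂ => (y * z + (x * z) * ((x * z) ^ 2 - z ^ 2) + Q (x * z, y * z, z))
      - (y + z ^ 2 * x * (-1 + y + x ^ 2 - y ^ 2)) * f1z (x, y, z))
      =O[l] fun z => z ^ 4 := by
    have heq : ∀ᶠ z in l, (y * z + (x * z) * ((x * z) ^ 2 - z ^ 2) + Q (x * z, y * z, z))
        - (y + z ^ 2 * x * (-1 + y + x ^ 2 - y ^ 2)) * f1z (x, y, z)
        = Q (x * z, y * z, z)
          - (y + z ^ 2 * x * (-1 + y + x ^ 2 - y ^ 2)) * R (x * z, y * z, z)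
          + z ^ 5 * (x ^ 2 * (-1 + 2 * y - 2 * y ^ 2 + y ^ 3) + x ^ 4 * (1 - y)) :=
      h3.mono fun z h => by rw [h]; ring
    exact ((hQz.sub hBRz).add (hz5 _)).congr'
      (heq.mono fun z h => h.symm) EventuallyEq.rfl
  -- from numerator bound + division to the claim
  have key : ∀ (F : ℂ → ℂ) (N A : ℂ → ℂ),
      (∀ᶠ z in l, F z * f1z (x, y, z) = N z) →
      ((fun z => N z - A z * f1z (x, y, z)) =O[l] fun z => z ^ 4) →
      (fun z => F z - A z) =O[l] fun z => z ^ 3 := by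
    intro F N A hFN hS
    have hDz : ∀ᶠ z in l, (F z - A z) * z
        = (N z - A z * f1z (x, y, z)) * (z / f1z (x, y, z)) := by
      filter_upwards [hFN, hfzne, hzne] with z hN hf hz
      have hx : F z = N z / f1z (x, y, z) := (eq_div_iff hf).mpr hN
      rw [hx, div_sub' hf, div_mul_eq_mul_div, mul_div_assoc]
      congr 1
      ring
    have hDzO : (fun z => (F z - A z) * z) =O[l] fun z => z ^ 4 * 1 :=
      (hS.mul hzfzO).congr' (hDz.mono fun z h => h.symm) EventuallyEq.rfl
    have := hDzO.mul (isBigO_refl (fun z : ℂ => z⁻¹) l)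
    refine this.congr' ?_ ?_
    · filter_upwards [hzne] with z hz
      show (F z - A z) * z * z⁻¹ = F z - A z
      rw [mul_assoc, mul_inv_cancel₀ hz, mul_one]
    · filter_upwards [hzne] with z hz
      show (z:ℂ) ^ 4 * 1 * z⁻¹ = z ^ 3
      rw [mul_one, pow_succ, mul_assoc, mul_inv_cancel₀ hz, mul_one]
  exact ⟨key _ _ _ h1 hSx, key _ _ _ h2 hSy, claimz⟩
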